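/- Let 𝕂 be ℝ or ℂ, let 0 < p_1, …, p_n ≤ q ≤ s < ∞, and let E_1, …, E_n, F be Banach spaces over 𝕂 with each E_i ≠ {0}. Suppose that every continuous n-linear operator from E_1 × ⋯ × E_n to F is multiple (s,q;p_1,…,p_n)-mixing summing. Then for every 1 ≤ j < n and every choice of indices k_1 < ⋯ < k_j in {1,…,n}, every continuous j-linear operator from E_{k_1} × ⋯ × E_{k_j} to F is multiple (s,q;p_{k_1},…,p_{k_j})-mixing summing. -/

import Mathlib

open scoped BigOperators
noncomputable section

/-- The weak `ℓ^q` norm of a finite family in a normed space: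
`sup_{‖φ‖ ≤ 1} (∑_j |φ(x_j)|^q)^{1/q}`. -/
def weakLpNorm (𝕂 : Type*) [RCLike 𝕂] {E : Type*} [NormedAddCommGroup E] [NormedSpace 𝕂 E]
    {J : Type*} [Fintype J] (q : ℝ) (x : J → E) : ℝ :=
  ⨆ φ : {φ : E →L[𝕂] 𝕂 // ‖φ‖ ≤ 1}, (∑ j, ‖φ.1 (x j)‖ ^ q) ^ (1 / q)

/-- The mixed `(s,q)`-norm of a finite family `z` in `F`:
`inf ‖(τ_j)‖_{ℓ^ρ} ‖(y_j)‖_{w,s}` over factorizations `z_j = τ_j • y_j`, where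
`1/ρ = 1/q - 1/s` (so `ρ = ∞`, i.e. the sup norm, when `s = q`). -/
def mixedNorm (𝕂 : Type*) [RCLike 𝕂] {F : Type*} [NormedAddCommGroup F] [NormedSpace 𝕂 F]
    {J : Type*} [Fintype J] (s q : ℝ) (z : J → F) : ℝ :=
  sInf { c : ℝ | ∃ τ : J → 𝕂, ∃ y : J → F, (∀ j, z j = τ j • y j) ∧
      c = (if s = q then ⨆ j, ‖τ j‖
           else (∑ j, ‖τ j‖ ^ (1 / q - 1 / s)⁻¹) ^ (1 / q - 1 / s)) * weakLpNorm 𝕂 s y }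

/-- `A` is multiple `(s,q;p₁,…,pₙ)`-mixing summing. -/
def MultipleMixingSumming (𝕂 : Type*) [RCLike 𝕂] {n : ℕ} {E : Fin n → Type*}
    [∀ i, NormedAddCommGroup (E i)] [∀ i, NormedSpace 𝕂 (E i)]
    {F : Type*} [NormedAddCommGroup F] [NormedSpace 𝕂 F]
    (s q : ℝ) (p : Fin n → ℝ) (A : ((i : Fin n) → E i) → F) : Prop :=
  ∃ σ : ℝ, 0 ≤ σ ∧ ∀ (m : ℕ) (x : (i : Fin n) → Fin m → E i),
    mixedNorm 𝕂 s q (fun j : Fin n → Fin m => A (fun i => x i (j i))) ≤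
      σ * ∏ i, weakLpNorm 𝕂 (p i) (x i)

/-- The multiple `(s,q;p₁,…,pₙ)`-mixing summing norm of `A`. -/
def mixingNorm (𝕂 : Type*) [RCLike 𝕂] {n : ℕ} {E : Fin n → Type*}
    [∀ i, NormedAddCommGroup (E i)] [∀ i, NormedSpace 𝕂 (E i)]
    {F : Type*} [NormedAddCommGroup F] [NormedSpace 𝕂 F]
    (s q : ℝ) (p : Fin n → ℝ) (A : ((i : Fin n) → E i) → F) : ℝ :=
  sInf { σ : ℝ | 0 ≤ σ ∧ ∀ (m : ℕ) (x : (i : Fin n) → Fin m → E i),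
    mixedNorm 𝕂 s q (fun j : Fin n → Fin m => A (fun i => x i (j i))) ≤
      σ * ∏ i, weakLpNorm 𝕂 (p i) (x i) }


section Aux
variable {𝕂 : Type*} [RCLike 𝕂]

lemma weakLpNorm_nonneg {E : Type*} [NormedAddCommGroup E] [NormedSpace 𝕂 E]
    {J : Type*} [Fintype J] (q : ℝ) (x : J → E) : 0 ≤ weakLpNorm 𝕂 q x :=
  Real.iSup_nonneg fun _ => Real.rpow_nonneg
    (Finset.sum_nonneg fun _ _ => Real.rpow_nonneg (norm_nonneg _) _) _

lemma sum_comp_le {J J' : Type*} [Fintype J] [Fintype J'] {ι : J → J'}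
    (hι : Function.Injective ι) {f : J' → ℝ} (hf : ∀ j', 0 ≤ f j') :
    ∑ j, f (ι j) ≤ ∑ j', f j' := by
  classical
  calc ∑ j, f (ι j) = ∑ j' ∈ Finset.univ.image ι, f j' :=
        (Finset.sum_image (fun a _ b _ hab => hι hab)).symm
    _ ≤ ∑ j', f j' := Finset.sum_le_sum_of_subset_of_nonneg (Finset.subset_univ _)
        (fun j' _ _ => hf j')

lemma weakLpNorm_comp_le {E : Type*} [NormedAddCommGroup E] [NormedSpace 𝕂 E]
    {J J' : Type*} [Fintype J] [Fintype J'] {ι : J → J'}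
    (hι : Function.Injective ι) {q : ℝ} (hq : 0 < q) (x : J' → E) :
    weakLpNorm 𝕂 q (x ∘ ι) ≤ weakLpNorm 𝕂 q x := by
  unfold weakLpNorm
  have hbdd : BddAbove (Set.range fun φ : {φ : E →L[𝕂] 𝕂 // ‖φ‖ ≤ 1} =>
      (∑ j, ‖φ.1 (x j)‖ ^ q) ^ (1 / q)) := by
    refine ⟨(∑ j, ‖x j‖ ^ q) ^ (1 / q), ?_⟩
    rintro _ ⟨φ, rfl⟩
    refine Real.rpow_le_rpow (Finset.sum_nonneg fun _ _ => Real.rpow_nonneg (norm_nonneg _) _)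
      (Finset.sum_le_sum fun j _ => ?_) (by positivity)
    refine Real.rpow_le_rpow (norm_nonneg _) ?_ hq.le
    calc ‖φ.1 (x j)‖ ≤ ‖φ.1‖ * ‖x j‖ := φ.1.le_opNorm _
      _ ≤ 1 * ‖x j‖ := by gcongr; exact φ.2
      _ = ‖x j‖ := one_mul _
  refine Real.iSup_le (fun φ => ?_) (weakLpNorm_nonneg q x)
  refine le_trans ?_ (le_ciSup hbdd φ)
  have hsum : ∑ j, ‖φ.1 ((x ∘ ι) j)‖ ^ q ≤ ∑ j', ‖φ.1 (x j')‖ ^ q :=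
    sum_comp_le hι (f := fun j' => ‖φ.1 (x j')‖ ^ q) fun j' => Real.rpow_nonneg (norm_nonneg _) _
  exact Real.rpow_le_rpow (Finset.sum_nonneg fun _ _ => Real.rpow_nonneg (norm_nonneg _) _)
    hsum (by positivity)

lemma weakLpNorm_of_isEmpty {E : Type*} [NormedAddCommGroup E] [NormedSpace 𝕂 E]
    {J : Type*} [Fintype J] [IsEmpty J] {q : ℝ} (hq : q ≠ 0) (x : J → E) :
    weakLpNorm 𝕂 q x = 0 := by
  haveI : Nonempty {φ : E →L[𝕂] 𝕂 // ‖φ‖ ≤ 1} := ⟨⟨0, by simp⟩⟩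
  unfold weakLpNorm
  have h : ∀ φ : {φ : E →L[𝕂] 𝕂 // ‖φ‖ ≤ 1}, (∑ j, ‖φ.1 (x j)‖ ^ q) ^ (1 / q) = 0 := by
    intro φ
    rw [Finset.univ_eq_empty, Finset.sum_empty, Real.zero_rpow (by simpa using hq)]
  simp only [h]
  exact ciSup_const

lemma mixedFactor_nonneg {J : Type*} [Fintype J] (s q : ℝ) (τ : J → 𝕂) :
    0 ≤ (if s = q then ⨆ j, ‖τ j‖
         else (∑ j, ‖τ j‖ ^ (1 / q - 1 / s)⁻¹) ^ (1 / q - 1 / s)) := by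
  split
  · exact Real.iSup_nonneg fun _ => norm_nonneg _
  · exact Real.rpow_nonneg (Finset.sum_nonneg fun _ _ => Real.rpow_nonneg (norm_nonneg _) _) _

lemma mixedSet_nonneg {F : Type*} [NormedAddCommGroup F] [NormedSpace 𝕂 F]
    {J : Type*} [Fintype J] {s q : ℝ} {z : J → F} :
    ∀ c ∈ { c : ℝ | ∃ τ : J → 𝕂, ∃ y : J → F, (∀ j, z j = τ j • y j) ∧
      c = (if s = q then ⨆ j, ‖τ j‖
           else (∑ j, ‖τ j‖ ^ (1 / q - 1 / s)⁻¹) ^ (1 / q - 1 / s)) * weakLpNorm 𝕂 s y },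
      0 ≤ c := by
  rintro c ⟨τ, y, _, rfl⟩
  exact mul_nonneg (mixedFactor_nonneg s q τ) (weakLpNorm_nonneg s y)

lemma mixedSet_nonempty {F : Type*} [NormedAddCommGroup F] [NormedSpace 𝕂 F]
    {J : Type*} [Fintype J] {s q : ℝ} (z : J → F) :
    { c : ℝ | ∃ τ : J → 𝕂, ∃ y : J → F, (∀ j, z j = τ j • y j) ∧
      c = (if s = q then ⨆ j, ‖τ j‖
           else (∑ j, ‖τ j‖ ^ (1 / q - 1 / s)⁻¹) ^ (1 / q - 1 / s)) * weakLpNorm 𝕂 s y }.Nonempty :=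
  ⟨_, fun _ => (1 : 𝕂), z, fun j => (one_smul 𝕂 (z j)).symm, rfl⟩

lemma mixedNorm_of_isEmpty {F : Type*} [NormedAddCommGroup F] [NormedSpace 𝕂 F]
    {J : Type*} [Fintype J] [IsEmpty J] {s q : ℝ} (hq : 0 < q) (hqs : q ≤ s) (z : J → F) :
    mixedNorm 𝕂 s q z = 0 := by
  have hs : (0 : ℝ) < s := lt_of_lt_of_le hq hqs
  have hzero : ∀ c ∈ { c : ℝ | ∃ τ : J → 𝕂, ∃ y : J → F, (∀ j, z j = τ j • y j) ∧
      c = (if s = q then ⨆ j, ‖τ j‖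
           else (∑ j, ‖τ j‖ ^ (1 / q - 1 / s)⁻¹) ^ (1 / q - 1 / s)) * weakLpNorm 𝕂 s y },
      c = 0 := by
    rintro c ⟨τ, y, _, rfl⟩
    rw [weakLpNorm_of_isEmpty hs.ne' y, mul_zero]
  obtain ⟨c₀, hc₀⟩ := mixedSet_nonempty (𝕂 := 𝕂) (s := s) (q := q) z
  unfold mixedNorm
  have hset : { c : ℝ | ∃ τ : J → 𝕂, ∃ y : J → F, (∀ j, z j = τ j • y j) ∧
      c = (if s = q then ⨆ j, ‖τ j‖
           else (∑ j, ‖τ j‖ ^ (1 / q - 1 / s)⁻¹) ^ (1 / q - 1 / s)) * weakLpNorm 𝕂 s y } = {0} := by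
    apply Set.eq_singleton_iff_unique_mem.mpr
    exact ⟨hzero c₀ hc₀ ▸ hc₀, hzero⟩
  rw [hset, csInf_singleton]

lemma mixedNorm_comp_le {F : Type*} [NormedAddCommGroup F] [NormedSpace 𝕂 F]
    {J J' : Type*} [Fintype J] [Fintype J'] {s q : ℝ} (hq : 0 < q) (hqs : q ≤ s)
    {ι : J → J'} (hι : Function.Injective ι) (z : J' → F) :
    mixedNorm 𝕂 s q (z ∘ ι) ≤ mixedNorm 𝕂 s q z := by
  unfold mixedNorm
  refine le_csInf (mixedSet_nonempty z) ?_
  rintro c ⟨τ, y, hzy, rfl⟩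
  have hmem : ((if s = q then ⨆ j, ‖(τ ∘ ι) j‖
        else (∑ j, ‖(τ ∘ ι) j‖ ^ (1 / q - 1 / s)⁻¹) ^ (1 / q - 1 / s)) *
        weakLpNorm 𝕂 s (y ∘ ι)) ∈
      { c : ℝ | ∃ τ' : J → 𝕂, ∃ y' : J → F, (∀ j, (z ∘ ι) j = τ' j • y' j) ∧
        c = (if s = q then ⨆ j, ‖τ' j‖
             else (∑ j, ‖τ' j‖ ^ (1 / q - 1 / s)⁻¹) ^ (1 / q - 1 / s)) * weakLpNorm 𝕂 s y' } :=
    ⟨τ ∘ ι, y ∘ ι, fun j => hzy (ι j), rfl⟩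
  refine csInf_le_of_le ⟨0, fun c hc => mixedSet_nonneg c hc⟩ hmem ?_
  refine mul_le_mul ?_ (weakLpNorm_comp_le hι (lt_of_lt_of_le hq hqs) y)
    (weakLpNorm_nonneg s (y ∘ ι)) (mixedFactor_nonneg s q τ)
  by_cases hsq : s = q
  · rw [if_pos hsq, if_pos hsq]
    cases isEmpty_or_nonempty J with
    | inl hJ => exact (Real.iSup_of_isEmpty _).le.trans (Real.iSup_nonneg fun _ => norm_nonneg _)
    | inr hJ =>
        refine ciSup_le fun j => ?_
        exact le_ciSup (f := fun j' => ‖τ j'‖) (Set.Finite.bddAbove (Set.finite_range _)) (ι j)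
  · rw [if_neg hsq, if_neg hsq]
    refine Real.rpow_le_rpow (Finset.sum_nonneg fun _ _ => Real.rpow_nonneg (norm_nonneg _) _)
      (sum_comp_le hι fun j' => Real.rpow_nonneg (norm_nonneg _) _) ?_
    have : 1 / s ≤ 1 / q := one_div_le_one_div_of_le hq hqs
    linarith
end Aux

/-- coincidence inheritance for multiple mixing summing operators.
If every continuous `n`-linear operator from `E₁ × ⋯ × Eₙ` to `F` is multiple
`(s,q;p₁,…,pₙ)`-mixing summing, then for every strictly increasing choice of `j < n`
indices `k₁ < ⋯ < k_j`, every continuous `j`-linear operator from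
`E_{k₁} × ⋯ × E_{k_j}` to `F` is multiple `(s,q;p_{k₁},…,p_{k_j})`-mixing summing. -/
theorem multipleMixingSumming_coincidence_inherit
    {𝕂 : Type*} [RCLike 𝕂] {n : ℕ} (hn : 1 ≤ n)
    (s q : ℝ) (p : Fin n → ℝ) (hp : ∀ k, 0 < p k) (hpq : ∀ k, p k ≤ q) (hqs : q ≤ s)
    (E : Fin n → Type*) [∀ i, NormedAddCommGroup (E i)] [∀ i, NormedSpace 𝕂 (E i)]
    [∀ i, CompleteSpace (E i)] [∀ i, Nontrivial (E i)]
    (F : Type*) [NormedAddCommGroup F] [NormedSpace 𝕂 F] [CompleteSpace F]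
    (h : ∀ T : ContinuousMultilinearMap 𝕂 E F, MultipleMixingSumming 𝕂 s q p (⇑T)) :
    ∀ (j : ℕ), 1 ≤ j → j < n → ∀ (k : Fin j → Fin n), StrictMono k →
      ∀ S : ContinuousMultilinearMap 𝕂 (fun i : Fin j => E (k i)) F,
        MultipleMixingSumming 𝕂 s q (fun i : Fin j => p (k i)) (⇑S) := by
  classical
  intro j hj hjn k hk S
  have hq0 : 0 < q := lt_of_lt_of_le (hp ⟨0, hn⟩) (hpq ⟨0, hn⟩)
  have hs0 : 0 < s := lt_of_lt_of_le hq0 hqs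
  -- norming vectors and functionals
  have hex : ∀ i : Fin n, ∃ (a : E i) (φ : E i →L[𝕂] 𝕂), ‖a‖ = 1 ∧ ‖φ‖ ≤ 1 ∧ φ a = 1 := by
    intro i
    obtain ⟨v, hv⟩ := exists_ne (0 : E i)
    have hnv : ‖v‖ ≠ 0 := norm_ne_zero_iff.2 hv
    refine ⟨((‖v‖ : 𝕂))⁻¹ • v, ?_⟩
    have hna : ‖((‖v‖ : 𝕂))⁻¹ • v‖ = 1 := by
      rw [norm_smul, norm_inv, RCLike.norm_ofReal, abs_of_nonneg (norm_nonneg v),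
        inv_mul_cancel₀ hnv]
    have ha0 : ((‖v‖ : 𝕂))⁻¹ • v ≠ 0 := by
      intro h0; rw [h0, norm_zero] at hna; norm_num at hna
    obtain ⟨g, hg1, hga⟩ := exists_dual_vector 𝕂 _ (norm_ne_zero_iff.2 ha0)
    exact ⟨g, hna, hg1.le, by rw [hga, hna]; norm_num⟩
  choose a φ hna hnφ hφa using hex
  -- the extended n-linear map
  set R : Finset (Fin n) := Finset.univ.filter (fun i => ¬ ∃ i', k i' = i) with hR
  have hmemR : ∀ i, i ∈ R ↔ ¬ ∃ i', k i' = i := by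
    intro i; rw [hR, Finset.mem_filter]; simp
  set Tm : MultilinearMap 𝕂 E F :=
    { toFun := fun x => (∏ i ∈ R, φ i (x i)) • S (fun i' => x (k i'))
      map_update_add' := by
        intro dec x i v w
        by_cases hi : ∃ i', k i' = i
        · obtain ⟨i₀, rfl⟩ := hi
          have hprod : ∀ u : E (k i₀),
              ∏ i'' ∈ R, φ i'' (Function.update x (k i₀) u i'') = ∏ i'' ∈ R, φ i'' (x i'') := by
            intro u
            refine Finset.prod_congr rfl fun i'' hi'' => ?_
            have : i'' ≠ k i₀ := by
              intro hcon; exact ((hmemR i'').1 hi'') ⟨i₀, hcon.symm⟩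
            rw [Function.update_of_ne this]
          have harg : ∀ u : E (k i₀),
              (fun i' => Function.update x (k i₀) u (k i')) =
                Function.update (fun i' => x (k i')) i₀ u := by
            intro u
            funext i'
            by_cases h' : i' = i₀
            · subst h'; simp
            · rw [Function.update_of_ne (fun hc => h' (hk.injective hc)),
                Function.update_of_ne h']
          simp only [hprod, harg, ContinuousMultilinearMap.map_update_add, smul_add]
        · have hiR : i ∈ R := (hmemR i).2 hi
          have harg : ∀ u : E i, (fun i' => Function.update x i u (k i')) =
              (fun i' => x (k i')) := by
            intro u; funext i'
            exact Function.update_of_ne (fun hc => hi ⟨i', hc⟩) u x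
          have hprod : ∀ u : E i,
              ∏ i'' ∈ R, φ i'' (Function.update x i u i'') =
                φ i u * ∏ i'' ∈ R.erase i, φ i'' (x i'') := by
            intro u
            rw [← Finset.mul_prod_erase R _ hiR]
            congr 1
            · rw [Function.update_self]
            · refine Finset.prod_congr rfl fun i'' hi'' => ?_
              rw [Function.update_of_ne (Finset.ne_of_mem_erase hi'')]
          simp only [hprod, harg, map_add, add_mul, add_smul]
      map_update_smul' := by
        intro dec x i c v
        by_cases hi : ∃ i', k i' = i
        · obtain ⟨i₀, rfl⟩ := hi
          have hprod : ∀ u : E (k i₀),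
              ∏ i'' ∈ R, φ i'' (Function.update x (k i₀) u i'') = ∏ i'' ∈ R, φ i'' (x i'') := by
            intro u
            refine Finset.prod_congr rfl fun i'' hi'' => ?_
            have : i'' ≠ k i₀ := by
              intro hcon; exact ((hmemR i'').1 hi'') ⟨i₀, hcon.symm⟩
            rw [Function.update_of_ne this]
          have harg : ∀ u : E (k i₀),
              (fun i' => Function.update x (k i₀) u (k i')) =
                Function.update (fun i' => x (k i')) i₀ u := by
            intro u
            funext i'
            by_cases h' : i' = i₀
            · subst h'; simp
            · rw [Function.update_of_ne (fun hc => h' (hk.injective hc)),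
                Function.update_of_ne h']
          simp only [hprod, harg, ContinuousMultilinearMap.map_update_smul]
          rw [smul_comm]
        · have hiR : i ∈ R := (hmemR i).2 hi
          have harg : ∀ u : E i, (fun i' => Function.update x i u (k i')) =
              (fun i' => x (k i')) := by
            intro u; funext i'
            exact Function.update_of_ne (fun hc => hi ⟨i', hc⟩) u x
          have hprod : ∀ u : E i,
              ∏ i'' ∈ R, φ i'' (Function.update x i u i'') =
                φ i u * ∏ i'' ∈ R.erase i, φ i'' (x i'') := by
            intro u
            rw [← Finset.mul_prod_erase R _ hiR]
            congr 1
            · rw [Function.update_self]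
            · refine Finset.prod_congr rfl fun i'' hi'' => ?_
              rw [Function.update_of_ne (Finset.ne_of_mem_erase hi'')]
          simp only [hprod, harg, map_smul, smul_eq_mul, mul_assoc, mul_smul] } with hTm
  have hTb : ∀ x : (i : Fin n) → E i, ‖Tm x‖ ≤ ‖S‖ * ∏ i, ‖x i‖ := by
    intro x
    have h1 : ‖Tm x‖ = ‖∏ i ∈ R, φ i (x i)‖ * ‖S fun i' => x (k i')‖ := norm_smul _ _
    rw [h1]
    have h2 : ‖∏ i ∈ R, φ i (x i)‖ ≤ ∏ i ∈ R, ‖x i‖ := by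
      rw [norm_prod]
      refine Finset.prod_le_prod (fun _ _ => norm_nonneg _) fun i _ => ?_
      calc ‖φ i (x i)‖ ≤ ‖φ i‖ * ‖x i‖ := (φ i).le_opNorm _
        _ ≤ 1 * ‖x i‖ := mul_le_mul_of_nonneg_right (hnφ i) (norm_nonneg _)
        _ = ‖x i‖ := one_mul _
    have h3 : ‖S fun i' => x (k i')‖ ≤ ‖S‖ * ∏ i', ‖x (k i')‖ := S.le_opNorm _
    have himg : Finset.univ.filter (fun i => ∃ i', k i' = i) = Finset.univ.image k := by
      ext i; simp [eq_comm]
    have h4 : (∏ i ∈ R, ‖x i‖) * ∏ i', ‖x (k i')‖ = ∏ i, ‖x i‖ := by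
      have h5 : ∏ i', ‖x (k i')‖ =
          ∏ i ∈ Finset.univ.filter (fun i => ∃ i', k i' = i), ‖x i‖ := by
        rw [himg, Finset.prod_image (fun a _ b _ hab => hk.injective hab)]
      rw [h5, hR, mul_comm]
      exact Finset.prod_filter_mul_prod_filter_not Finset.univ _ _
    calc ‖∏ i ∈ R, φ i (x i)‖ * ‖S fun i' => x (k i')‖
        ≤ (∏ i ∈ R, ‖x i‖) * (‖S‖ * ∏ i', ‖x (k i')‖) :=
          mul_le_mul h2 h3 (norm_nonneg _) (Finset.prod_nonneg fun _ _ => norm_nonneg _)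
      _ = ‖S‖ * ((∏ i ∈ R, ‖x i‖) * ∏ i', ‖x (k i')‖) := by ring
      _ = ‖S‖ * ∏ i, ‖x i‖ := by rw [h4]
  set T : ContinuousMultilinearMap 𝕂 E F := Tm.mkContinuous ‖S‖ hTb with hT
  obtain ⟨σ, hσ0, hσ⟩ := h T
  refine ⟨σ, hσ0, ?_⟩
  intro m x
  rcases Nat.eq_zero_or_pos m with hm | hm
  · subst hm
    haveI : Nonempty (Fin j) := ⟨⟨0, hj⟩⟩
    rw [mixedNorm_of_isEmpty hq0 hqs]
    exact mul_nonneg hσ0 (Finset.prod_nonneg fun i _ => weakLpNorm_nonneg _ _)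
  · haveI : NeZero m := ⟨hm.ne'⟩
    set X : (i : Fin n) → Fin m → E i := fun i =>
      if h2 : ∃ i', k i' = i then fun l => cast (congrArg E h2.choose_spec) (x h2.choose l)
      else fun l : Fin m => if (l : ℕ) = 0 then a i else 0 with hX
    have hXk : ∀ i' : Fin j, X (k i') = x i' := by
      intro i'
      have h2 : ∃ i'', k i'' = k i' := ⟨i', rfl⟩
      funext l
      have key : ∀ (c : Fin j) (hcs : k c = k i'),
          cast (congrArg E hcs) (x c l) = x i' l := by
        intro c hcs
        obtain rfl : c = i' := hk.injective hcs
        rfl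
      simp only [hX, dif_pos h2]
      exact key h2.choose h2.choose_spec
    have hX0 : ∀ i, (¬ ∃ i', k i' = i) → X i = fun l : Fin m => if (l : ℕ) = 0 then a i else 0 := by
      intro i hi; simp only [hX, dif_neg hi]
    set ι : (Fin j → Fin m) → (Fin n → Fin m) := fun w i =>
      if h2 : ∃ i', k i' = i then w h2.choose else 0 with hι
    have hιk : ∀ (w : Fin j → Fin m) (i' : Fin j), ι w (k i') = w i' := by
      intro w i'
      have h2 : ∃ i'', k i'' = k i' := ⟨i', rfl⟩
      simp only [hι, dif_pos h2]
      exact congrArg w (hk.injective h2.choose_spec)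
    have hι0 : ∀ w i, (¬ ∃ i', k i' = i) → ι w i = 0 := by
      intro w i hi; simp only [hι, dif_neg hi]
    have hιinj : Function.Injective ι := by
      intro w w' hww
      funext i'
      rw [← hιk w i', ← hιk w' i', hww]
    have hTapp : ∀ y : (i : Fin n) → E i,
        T y = (∏ i ∈ R, φ i (y i)) • S (fun i' => y (k i')) := fun y => rfl
    have hzz : (fun jv : Fin j → Fin m => S fun i => x i (jv i)) =
        (fun jv : Fin n → Fin m => T fun i => X i (jv i)) ∘ ι := by
      funext w
      show S (fun i => x i (w i)) = T fun i => X i (ι w i)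
      rw [hTapp]
      have h1 : ∏ i ∈ R, φ i (X i (ι w i)) = 1 := by
        refine Finset.prod_eq_one fun i hiR => ?_
        have hi := (hmemR i).1 hiR
        rw [hι0 w i hi, hX0 i hi]
        simp [hφa i]
      rw [h1, one_smul]
      congr 1
      funext i'
      rw [hιk, hXk]
    rw [hzz]
    refine le_trans (mixedNorm_comp_le hq0 hqs hιinj _) ?_
    refine le_trans (hσ m X) ?_
    refine mul_le_mul_of_nonneg_left ?_ hσ0
    have hW1 : ∀ i ∈ R, weakLpNorm 𝕂 (p i) (X i) ≤ 1 := by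
      intro i hiR
      have hi := (hmemR i).1 hiR
      rw [hX0 i hi]
      refine Real.iSup_le (fun ψ => ?_) zero_le_one
      refine Real.rpow_le_one
        (Finset.sum_nonneg fun _ _ => Real.rpow_nonneg (norm_nonneg _) _) ?_
        (one_div_nonneg.mpr (hp i).le)
      calc ∑ l : Fin m, ‖ψ.1 (if (l : ℕ) = 0 then a i else 0)‖ ^ (p i)
          ≤ ∑ l : Fin m, if (l : ℕ) = 0 then (1:ℝ) else 0 := ?_
        _ ≤ 1 := ?_
      · refine Finset.sum_le_sum fun l _ => ?_
        by_cases hl : (l : ℕ) = 0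
        · rw [if_pos hl, if_pos hl]
          refine Real.rpow_le_one (norm_nonneg _) ?_ (hp i).le
          calc ‖ψ.1 (a i)‖ ≤ ‖ψ.1‖ * ‖a i‖ := ψ.1.le_opNorm _
            _ ≤ 1 * 1 := mul_le_mul ψ.2 (hna i).le (norm_nonneg _) zero_le_one
            _ = 1 := one_mul 1
        · rw [if_neg hl, if_neg hl, map_zero, norm_zero, Real.zero_rpow (hp i).ne']
      · simp only [show ∀ l : Fin m, ((l : ℕ) = 0) ↔ (l = 0) from
          fun l => Fin.val_eq_zero_iff]
        rw [Finset.sum_ite_eq' Finset.univ (0 : Fin m) (fun _ => (1:ℝ))]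
        simp
    have himg : Finset.univ.filter (fun i => ∃ i', k i' = i) = Finset.univ.image k := by
      ext i; simp [eq_comm]
    have hsplit : ∏ i, weakLpNorm 𝕂 (p i) (X i) =
        (∏ i ∈ Finset.univ.filter (fun i => ∃ i', k i' = i), weakLpNorm 𝕂 (p i) (X i)) *
          ∏ i ∈ R, weakLpNorm 𝕂 (p i) (X i) := by
      rw [hR]
      exact (Finset.prod_filter_mul_prod_filter_not Finset.univ _ _).symm
    have heq : (∏ i ∈ Finset.univ.filter (fun i => ∃ i', k i' = i),
          weakLpNorm 𝕂 (p i) (X i)) = ∏ i', weakLpNorm 𝕂 (p (k i')) (x i') := by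
      rw [himg, Finset.prod_image (fun a _ b _ hab => hk.injective hab)]
      exact Finset.prod_congr rfl fun i' _ => by rw [hXk]
    calc ∏ i, weakLpNorm 𝕂 (p i) (X i)
        = (∏ i', weakLpNorm 𝕂 (p (k i')) (x i')) * ∏ i ∈ R, weakLpNorm 𝕂 (p i) (X i) := by
          rw [hsplit, heq]
      _ ≤ (∏ i', weakLpNorm 𝕂 (p (k i')) (x i')) * 1 :=
          mul_le_mul_of_nonneg_left
            (Finset.prod_le_one (fun i _ => weakLpNorm_nonneg _ _) hW1)
            (Finset.prod_nonneg fun _ _ => weakLpNorm_nonneg _ _)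
      _ = _ := mul_one _
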